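/- Let k ≥ 2, σ_i = i(k−i)/2, and let f : ℝ^k → ℝ^k be the right-hand side of system (P), i.e. f_1(ξ) = −σ₁(e^{−(ξ₂−ξ₁)} − 1), f_i(ξ) = σ_{i−1}(e^{−(ξ_i−ξ_{i−1})} − 1) − σ_i(e^{−(ξ_{i+1}−ξ_i)} − 1) for 2 ≤ i ≤ k−1, and f_k(ξ) = σ_{k−1}(e^{−(ξ_k−ξ_{k−1})} − 1). Let η > 0, C₀ > 0 and τ₀ ≥ 0. Then for every ε > 0 there exists τ̂ ≥ τ₀, depending only on k, η, C₀, τ₀ and ε, such that every C¹ function ξ : [τ₀, ∞) → ℝ^k satisfying, for all τ ≥ τ₀, ∑_{i=1}^k ξ_i(τ) = 0, ‖ξ(τ)‖ ≤ C₀ and ‖ξ'(τ) − f(ξ(τ))‖ ≤ C₀·e^{−ητ}, verifies max_{1≤i≤k} |ξ_i(τ̂)| ≤ ε. -/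

import Mathlib

/-- `σᵢ = i(k-i)/2` (so that `σ₀ = σ_k = 0`). -/
noncomputable def sig (k i : ℕ) : ℝ := (i : ℝ) * ((k : ℝ) - (i : ℝ)) / 2

/-- The right-hand side of system (P): for `i = 1,…,k`,
`fᵢ(ξ) = σᵢ₋₁(e^{-(ξᵢ-ξᵢ₋₁)} - 1) - σᵢ(e^{-(ξᵢ₊₁-ξᵢ)} - 1)`
(the conventions for `i = 1` and `i = k` are automatic since `σ₀ = σ_k = 0`). -/
noncomputable def fP (k : ℕ) (ξ : ℕ → ℝ) (i : ℕ) : ℝ :=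
  sig k (i - 1) * (Real.exp (-(ξ i - ξ (i - 1))) - 1)
    - sig k i * (Real.exp (-(ξ (i + 1) - ξ i)) - 1)

lemma sig_zero (k : ℕ) : sig k 0 = 0 := by simp [sig]
lemma sig_self (k : ℕ) : sig k k = 0 := by simp [sig]

lemma sig_nonneg {k i : ℕ} (h : i ≤ k) : 0 ≤ sig k i := by
  have : (i : ℝ) ≤ (k : ℝ) := by exact_mod_cast h
  unfold sig
  have h0 : (0:ℝ) ≤ (i:ℝ) := Nat.cast_nonneg i
  nlinarith

lemma sig_pos {k i : ℕ} (h1 : 1 ≤ i) (h2 : i ≤ k - 1) (hk : 2 ≤ k) : 0 < sig k i := by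
  have hik : i + 1 ≤ k := by omega
  have h1' : (1:ℝ) ≤ (i:ℝ) := by exact_mod_cast h1
  have h2' : (i:ℝ) + 1 ≤ (k:ℝ) := by exact_mod_cast hik
  unfold sig
  nlinarith

lemma expd_nonpos (d : ℝ) : (Real.exp (-d) - 1) * d ≤ 0 := by
  rcases le_total d 0 with h | h
  · nlinarith [Real.one_le_exp (neg_nonneg.mpr h)]
  · nlinarith [Real.exp_le_one_iff.mpr (neg_nonpos.mpr h)]

lemma expd_eq_zero {d : ℝ} (h : (Real.exp (-d) - 1) * d = 0) : d = 0 := by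
  by_contra hd
  rcases lt_or_gt_of_ne hd with h1 | h1
  · nlinarith [Real.one_lt_exp_iff.mpr (neg_pos.mpr h1)]
  · nlinarith [Real.exp_lt_one_iff.mpr (by linarith : -d < 0)]

noncomputable def Dfun (k : ℕ) (x : ℕ → ℝ) : ℝ :=
  -∑ i ∈ Finset.Icc 1 (k - 1),
      sig k i * (Real.exp (-(x (i + 1) - x i)) - 1) * (x (i + 1) - x i)

lemma Dfun_nonneg (k : ℕ) (x : ℕ → ℝ) : 0 ≤ Dfun k x := by
  unfold Dfun
  rw [neg_nonneg]
  apply Finset.sum_nonpos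
  intro i hi
  rw [Finset.mem_Icc] at hi
  rw [mul_assoc]
  exact mul_nonpos_iff.mpr (Or.inl ⟨sig_nonneg (by omega), expd_nonpos _⟩)

lemma Dfun_congr {k : ℕ} {x x' : ℕ → ℝ} (h : ∀ j, 1 ≤ j → j ≤ k → x j = x' j) :
    Dfun k x = Dfun k x' := by
  unfold Dfun
  congr 1
  apply Finset.sum_congr rfl
  intro i hi
  rw [Finset.mem_Icc] at hi
  rw [h i (by omega) (by omega), h (i+1) (by omega) (by omega)]

lemma key_identity (k : ℕ) (hk : 1 ≤ k) (x : ℕ → ℝ) :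
    ∑ i ∈ Finset.Icc 1 k, x i * fP k x i
      = ∑ i ∈ Finset.Icc 1 (k - 1),
          sig k i * (Real.exp (-(x (i + 1) - x i)) - 1) * (x (i + 1) - x i) := by
  have e0 : ∑ i ∈ Finset.Icc 1 k, x i * fP k x i
      = (∑ i ∈ Finset.Icc 1 k, x i * (sig k (i-1) * (Real.exp (-(x i - x (i-1))) - 1)))
        - ∑ i ∈ Finset.Icc 1 k, x i * (sig k i * (Real.exp (-(x (i+1) - x i)) - 1)) := by
    rw [← Finset.sum_sub_distrib]
    apply Finset.sum_congr rfl
    intro i _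
    simp only [fP]; ring
  have e1 : ∑ i ∈ Finset.Icc 1 k, x i * (sig k (i-1) * (Real.exp (-(x i - x (i-1))) - 1))
      = ∑ j ∈ Finset.Icc 1 (k-1), x (j+1) * (sig k j * (Real.exp (-(x (j+1) - x j)) - 1)) := by
    rw [← Finset.sum_subset (Finset.Icc_subset_Icc (by norm_num) le_rfl :
          Finset.Icc 2 k ⊆ Finset.Icc 1 k)]
    · have hmap : Finset.Icc 2 k = Finset.map (addLeftEmbedding 1) (Finset.Icc 1 (k-1)) := by
        rw [Finset.map_add_left_Icc]
        congr 1
        omega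
      rw [hmap, Finset.sum_map]
      apply Finset.sum_congr rfl
      intro j hj
      have h1 : addLeftEmbedding 1 j = j + 1 := by
        simp [addLeftEmbedding, add_comm]
      rw [h1]
      simp [Nat.add_sub_cancel]
    · intro i hi hni
      rw [Finset.mem_Icc] at hi
      rw [Finset.mem_Icc] at hni
      have : i = 1 := by omega
      subst this
      simp [sig_zero]
  have e2 : ∑ i ∈ Finset.Icc 1 k, x i * (sig k i * (Real.exp (-(x (i+1) - x i)) - 1))
      = ∑ i ∈ Finset.Icc 1 (k-1), x i * (sig k i * (Real.exp (-(x (i+1) - x i)) - 1)) := by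
    rw [← Finset.sum_subset (Finset.Icc_subset_Icc le_rfl (Nat.sub_le k 1))]
    intro i hi hni
    rw [Finset.mem_Icc] at hi
    rw [Finset.mem_Icc] at hni
    have : i = k := by omega
    subst this
    simp [sig_self]
  rw [e0, e1, e2, ← Finset.sum_sub_distrib]
  apply Finset.sum_congr rfl
  intro i _
  ring

lemma Dfun_pos {k : ℕ} (hk : 2 ≤ k) {x : ℕ → ℝ}
    (hsum : ∑ i ∈ Finset.Icc 1 k, x i = 0)
    (hne : ∃ i ∈ Finset.Icc 1 k, x i ≠ 0) : 0 < Dfun k x := by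
  rcases (Dfun_nonneg k x).lt_or_eq with h | h
  · exact h
  exfalso
  -- Dfun = 0 : all terms vanish, hence x is constant on [1,k], hence 0
  have hterm : ∀ i ∈ Finset.Icc 1 (k-1),
      sig k i * (Real.exp (-(x (i + 1) - x i)) - 1) * (x (i + 1) - x i) ≤ 0 := by
    intro i hi
    rw [Finset.mem_Icc] at hi
    rw [mul_assoc]
    exact mul_nonpos_iff.mpr (Or.inl ⟨sig_nonneg (by omega), expd_nonpos _⟩)
  have hS : ∑ i ∈ Finset.Icc 1 (k-1),
      sig k i * (Real.exp (-(x (i + 1) - x i)) - 1) * (x (i + 1) - x i) = 0 := by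
    unfold Dfun at h
    linarith [h.symm]
  have hzero := (Finset.sum_eq_zero_iff_of_nonpos hterm).mp hS
  have hstep : ∀ i, 1 ≤ i → i ≤ k - 1 → x (i+1) = x i := by
    intro i h1 h2
    have hz := hzero i (Finset.mem_Icc.mpr ⟨h1, h2⟩)
    rw [mul_assoc] at hz
    have hσ : sig k i ≠ 0 := ne_of_gt (sig_pos h1 h2 hk)
    have := (mul_eq_zero.mp hz).resolve_left hσ
    have := expd_eq_zero this
    linarith
  have hconst : ∀ i, 1 ≤ i → i ≤ k → x i = x 1 := by
    intro i h1 h2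
    induction i with
    | zero => omega
    | succ n ih =>
      rcases Nat.eq_or_lt_of_le h1 with h | h
      · rw [← h]
      · have hn1 : 1 ≤ n := by omega
        have hnk : n ≤ k - 1 := by omega
        rw [hstep n hn1 hnk]
        exact ih hn1 (by omega)
  have hsum' : ∑ i ∈ Finset.Icc 1 k, x i = (k : ℝ) * x 1 := by
    have e : ∑ i ∈ Finset.Icc 1 k, x i = ∑ i ∈ Finset.Icc 1 k, x 1 :=
      Finset.sum_congr rfl (fun i hi => by
        rw [Finset.mem_Icc] at hi
        exact hconst i hi.1 hi.2)
    have hcard : k + 1 - 1 = k := by omega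
    rw [e, Finset.sum_const, Nat.card_Icc, hcard, nsmul_eq_mul]
  have hx1 : x 1 = 0 := by
    rw [hsum'] at hsum
    have hk0 : (k:ℝ) ≠ 0 := by positivity
    exact (mul_eq_zero.mp hsum).resolve_left hk0
  obtain ⟨i, hi, hxi⟩ := hne
  rw [Finset.mem_Icc] at hi
  exact hxi (by rw [hconst i hi.1 hi.2, hx1])

noncomputable def extF (k : ℕ) (y : Fin k → ℝ) : ℕ → ℝ := fun j =>
  if h : 1 ≤ j ∧ j ≤ k then y ⟨j - 1, by omega⟩ else 0

lemma cont_extF (k j : ℕ) : Continuous fun y : Fin k → ℝ => extF k y j := by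
  by_cases h : 1 ≤ j ∧ j ≤ k
  · simp only [extF, dif_pos h]
    exact continuous_apply _
  · simp only [extF, dif_neg h]
    exact continuous_const

lemma extF_restrict {k : ℕ} (x : ℕ → ℝ) {i : ℕ} (h1 : 1 ≤ i) (h2 : i ≤ k) :
    extF k (fun j : Fin k => x ((j : ℕ) + 1)) i = x i := by
  simp only [extF, dif_pos (⟨h1, h2⟩ : 1 ≤ i ∧ i ≤ k)]
  congr 1
  omega

lemma delta_claim (k : ℕ) (hk : 2 ≤ k) (C₀ a : ℝ) (hC₀ : 0 < C₀) (ha : 0 < a) :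
    ∃ δ : ℝ, 0 < δ ∧ ∀ x : ℕ → ℝ,
      (∑ i ∈ Finset.Icc 1 k, x i = 0) →
      (∑ i ∈ Finset.Icc 1 k, x i ^ 2 ≤ C₀ ^ 2) →
      (a ≤ ∑ i ∈ Finset.Icc 1 k, x i ^ 2) → δ ≤ Dfun k x := by
  classical
  set K : Set (Fin k → ℝ) :=
    {y | ∑ i ∈ Finset.Icc 1 k, extF k y i = 0 ∧
         ∑ i ∈ Finset.Icc 1 k, (extF k y i) ^ 2 ≤ C₀ ^ 2 ∧
         a ≤ ∑ i ∈ Finset.Icc 1 k, (extF k y i) ^ 2} with hKdef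
  have hmemK : ∀ x : ℕ → ℝ,
      (∑ i ∈ Finset.Icc 1 k, x i = 0) →
      (∑ i ∈ Finset.Icc 1 k, x i ^ 2 ≤ C₀ ^ 2) →
      (a ≤ ∑ i ∈ Finset.Icc 1 k, x i ^ 2) →
      (fun j : Fin k => x ((j : ℕ) + 1)) ∈ K ∧
        Dfun k (extF k (fun j : Fin k => x ((j : ℕ) + 1))) = Dfun k x := by
    intro x h0 h1 h2
    have he : ∀ i ∈ Finset.Icc 1 k, extF k (fun j : Fin k => x ((j : ℕ) + 1)) i = x i := by
      intro i hi
      rw [Finset.mem_Icc] at hi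
      exact extF_restrict x hi.1 hi.2
    have hsum1 : ∑ i ∈ Finset.Icc 1 k, extF k (fun j : Fin k => x ((j : ℕ) + 1)) i
        = ∑ i ∈ Finset.Icc 1 k, x i := Finset.sum_congr rfl he
    have hsum2 : ∑ i ∈ Finset.Icc 1 k, (extF k (fun j : Fin k => x ((j : ℕ) + 1)) i) ^ 2
        = ∑ i ∈ Finset.Icc 1 k, x i ^ 2 :=
      Finset.sum_congr rfl (fun i hi => by rw [he i hi])
    refine ⟨⟨by rw [hsum1]; exact h0, by rw [hsum2]; exact h1, by rw [hsum2]; exact h2⟩, ?_⟩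
    apply Dfun_congr
    intro j hj1 hj2
    exact extF_restrict x hj1 hj2
  by_cases hne : K.Nonempty
  · -- compactness
    have hcont : Continuous fun y : Fin k → ℝ => Dfun k (extF k y) := by
      unfold Dfun
      apply Continuous.neg
      apply continuous_finset_sum
      intro i _
      have h1 : Continuous fun y : Fin k → ℝ => extF k y (i+1) - extF k y i :=
        (cont_extF k (i+1)).sub (cont_extF k i)
      exact (continuous_const.mul ((Real.continuous_exp.comp h1.neg).sub continuous_const)).mul h1
    have hclosed : IsClosed K := by
      have c0 : Continuous fun y : Fin k → ℝ => ∑ i ∈ Finset.Icc 1 k, extF k y i :=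
        continuous_finset_sum _ (fun i _ => cont_extF k i)
      have c2 : Continuous fun y : Fin k → ℝ => ∑ i ∈ Finset.Icc 1 k, (extF k y i) ^ 2 :=
        continuous_finset_sum _ (fun i _ => (cont_extF k i).pow 2)
      have : K = {y | ∑ i ∈ Finset.Icc 1 k, extF k y i = 0} ∩
          ({y | ∑ i ∈ Finset.Icc 1 k, (extF k y i) ^ 2 ≤ C₀ ^ 2} ∩
           {y | a ≤ ∑ i ∈ Finset.Icc 1 k, (extF k y i) ^ 2}) := rfl
      rw [this]
      exact (isClosed_eq c0 continuous_const).inter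
        ((isClosed_le c2 continuous_const).inter (isClosed_le continuous_const c2))
    have hbdd : K ⊆ Metric.closedBall 0 C₀ := by
      intro y hy
      obtain ⟨-, hy2, -⟩ := hy
      rw [Metric.mem_closedBall, dist_zero_right]
      refine (pi_norm_le_iff_of_nonneg hC₀.le).mpr (fun j => ?_)
      have hj : 1 ≤ (j : ℕ) + 1 ∧ (j : ℕ) + 1 ≤ k := ⟨by omega, by omega⟩
      have hyj : extF k y ((j : ℕ) + 1) = y j := by
        simp only [extF, dif_pos hj, Nat.add_sub_cancel, Fin.eta]
      have hsq : (y j) ^ 2 ≤ C₀ ^ 2 := by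
        calc (y j) ^ 2 = (extF k y ((j : ℕ) + 1)) ^ 2 := by rw [hyj]
          _ ≤ ∑ i ∈ Finset.Icc 1 k, (extF k y i) ^ 2 :=
              Finset.single_le_sum (f := fun i => (extF k y i) ^ 2)
                (fun i _ => sq_nonneg _) (Finset.mem_Icc.mpr hj)
          _ ≤ C₀ ^ 2 := hy2
      have : |y j| ≤ C₀ := by
        rw [← Real.sqrt_sq_eq_abs, ← Real.sqrt_sq hC₀.le]
        exact Real.sqrt_le_sqrt hsq
      simpa using this
    have hcompact : IsCompact K :=
      Metric.isCompact_of_isClosed_isBounded hclosed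
        (Metric.isBounded_closedBall.subset hbdd)
    obtain ⟨y₀, hy₀K, hmin⟩ := hcompact.exists_isMinOn hne hcont.continuousOn
    refine ⟨Dfun k (extF k y₀), ?_, ?_⟩
    · obtain ⟨h0, h1, h2⟩ := hy₀K
      apply Dfun_pos hk h0
      by_contra hcon
      push_neg at hcon
      have : ∑ i ∈ Finset.Icc 1 k, (extF k y₀ i) ^ 2 = 0 :=
        Finset.sum_eq_zero (fun i hi => by rw [hcon i hi]; ring)
      rw [this] at h2
      linarith
    · intro x h0 h1 h2
      obtain ⟨hyK, heq⟩ := hmemK x h0 h1 h2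
      calc Dfun k (extF k y₀) ≤ Dfun k (extF k (fun j : Fin k => x ((j : ℕ) + 1))) := hmin hyK
        _ = Dfun k x := heq
  · refine ⟨1, one_pos, fun x h0 h1 h2 => absurd ⟨_, (hmemK x h0 h1 h2).1⟩ hne⟩


set_option maxHeartbeats 1000000 in
theorem stmt17 (k : ℕ) (hk : 2 ≤ k) (η C₀ τ₀ : ℝ)
    (hη : 0 < η) (hC₀ : 0 < C₀) (hτ₀ : 0 ≤ τ₀) :
    ∀ ε > 0, ∃ τhat : ℝ, τ₀ ≤ τhat ∧
      ∀ ξ ξ' : ℕ → ℝ → ℝ,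
        (∀ i, 1 ≤ i → i ≤ k → ∀ τ : ℝ, τ₀ ≤ τ → HasDerivAt (ξ i) (ξ' i τ) τ) →
        (∀ τ : ℝ, τ₀ ≤ τ → ∑ i ∈ Finset.Icc 1 k, ξ i τ = 0) →
        (∀ τ : ℝ, τ₀ ≤ τ →
          Real.sqrt (∑ i ∈ Finset.Icc 1 k, (ξ i τ) ^ 2) ≤ C₀) →
        (∀ τ : ℝ, τ₀ ≤ τ →
          Real.sqrt (∑ i ∈ Finset.Icc 1 k, (ξ' i τ - fP k (fun j => ξ j τ) i) ^ 2)
            ≤ C₀ * Real.exp (-η * τ)) →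
        ∀ i, 1 ≤ i → i ≤ k → |ξ i τhat| ≤ ε := by
  intro ε hε
  set a : ℝ := ε ^ 2 / 2 with hadef
  have ha : 0 < a := by positivity
  obtain ⟨δ, hδ, hδle⟩ := delta_claim k hk C₀ a hC₀ ha
  set m : ℝ := min (δ / (2 * C₀ ^ 2)) (a * η / (2 * C₀ ^ 2)) with hmdef
  have hm : 0 < m := lt_min (by positivity) (by positivity)
  set τ₁ : ℝ := max τ₀ (-Real.log m / η) with hτ₁def
  have hτ₀τ₁ : τ₀ ≤ τ₁ := le_max_left _ _
  have hexpτ₁ : Real.exp (-η * τ₁) ≤ m := by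
    have h1 : -Real.log m / η ≤ τ₁ := le_max_right _ _
    rw [div_le_iff₀ hη] at h1
    calc Real.exp (-η * τ₁) ≤ Real.exp (Real.log m) :=
          Real.exp_le_exp.mpr (by nlinarith)
      _ = m := Real.exp_log hm
  have hexp_le : ∀ τ : ℝ, τ₁ ≤ τ → Real.exp (-η * τ) ≤ m := fun τ hτ =>
    le_trans (Real.exp_le_exp.mpr (by nlinarith)) hexpτ₁
  set τhat : ℝ := τ₁ + (C₀ ^ 2 / δ + 1) with hτhatdef
  have hτ₁τhat : τ₁ ≤ τhat := le_add_of_nonneg_right (by positivity)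
  refine ⟨τhat, le_trans hτ₀τ₁ hτ₁τhat, ?_⟩
  intro ξ ξ' hderiv hsum hnorm herr
  -- derivative of W
  have hW : ∀ τ, τ₀ ≤ τ →
      HasDerivAt (fun t => ∑ i ∈ Finset.Icc 1 k, ξ i t ^ 2)
        (∑ i ∈ Finset.Icc 1 k, 2 * ξ i τ * ξ' i τ) τ := by
    intro τ hτ
    have h := HasDerivAt.fun_sum (u := Finset.Icc 1 k)
      (fun i hi => ((hderiv i (Finset.mem_Icc.mp hi).1 (Finset.mem_Icc.mp hi).2 τ hτ).pow 2))
    simpa using h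
  -- a priori bounds
  have hA : ∀ τ, τ₀ ≤ τ → ∑ i ∈ Finset.Icc 1 k, ξ i τ ^ 2 ≤ C₀ ^ 2 := by
    intro τ hτ
    have h := hnorm τ hτ
    have hS : 0 ≤ ∑ i ∈ Finset.Icc 1 k, ξ i τ ^ 2 :=
      Finset.sum_nonneg fun i _ => sq_nonneg _
    nlinarith [Real.sq_sqrt hS, Real.sqrt_nonneg (∑ i ∈ Finset.Icc 1 k, ξ i τ ^ 2)]
  have hB : ∀ τ, τ₀ ≤ τ →
      ∑ i ∈ Finset.Icc 1 k, (ξ' i τ - fP k (fun j => ξ j τ) i) ^ 2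
        ≤ (C₀ * Real.exp (-η * τ)) ^ 2 := by
    intro τ hτ
    have h := herr τ hτ
    have hS : 0 ≤ ∑ i ∈ Finset.Icc 1 k, (ξ' i τ - fP k (fun j => ξ j τ) i) ^ 2 :=
      Finset.sum_nonneg fun i _ => sq_nonneg _
    nlinarith [Real.sq_sqrt hS,
      Real.sqrt_nonneg (∑ i ∈ Finset.Icc 1 k, (ξ' i τ - fP k (fun j => ξ j τ) i) ^ 2)]
  -- Cauchy-Schwarz bound on error term
  have hCS : ∀ τ, τ₀ ≤ τ →
      ∑ i ∈ Finset.Icc 1 k, ξ i τ * (ξ' i τ - fP k (fun j => ξ j τ) i)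
        ≤ C₀ * (C₀ * Real.exp (-η * τ)) := by
    intro τ hτ
    have hcs := Finset.sum_mul_sq_le_sq_mul_sq (Finset.Icc 1 k) (fun i => ξ i τ)
      (fun i => ξ' i τ - fP k (fun j => ξ j τ) i)
    have h1 := hA τ hτ
    have h2 := hB τ hτ
    have hS1 : 0 ≤ ∑ i ∈ Finset.Icc 1 k, ξ i τ ^ 2 :=
      Finset.sum_nonneg fun i _ => sq_nonneg _
    have hS2 : 0 ≤ ∑ i ∈ Finset.Icc 1 k, (ξ' i τ - fP k (fun j => ξ j τ) i) ^ 2 :=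
      Finset.sum_nonneg fun i _ => sq_nonneg _
    have hq : (0:ℝ) ≤ C₀ * (C₀ * Real.exp (-η * τ)) := by positivity
    have ht2 : (∑ i ∈ Finset.Icc 1 k, ξ i τ * (ξ' i τ - fP k (fun j => ξ j τ) i)) ^ 2
        ≤ (C₀ * (C₀ * Real.exp (-η * τ))) ^ 2 := by
      have hmul := mul_le_mul h1 h2 hS2 (sq_nonneg C₀)
      nlinarith [hcs, hmul]
    nlinarith [ht2, hq]
  -- main differential inequality
  have hsplit : ∀ τ, τ₀ ≤ τ →
      ∑ i ∈ Finset.Icc 1 k, 2 * ξ i τ * ξ' i τ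
        ≤ 2 * (C₀ * (C₀ * Real.exp (-η * τ))) - 2 * Dfun k (fun j => ξ j τ) := by
    intro τ hτ
    have hkey := key_identity k (by omega) (fun j => ξ j τ)
    have hfsum : ∑ i ∈ Finset.Icc 1 k, ξ i τ * fP k (fun j => ξ j τ) i
        = -Dfun k (fun j => ξ j τ) := by
      rw [hkey]; unfold Dfun; ring
    have hWd : ∑ i ∈ Finset.Icc 1 k, 2 * ξ i τ * ξ' i τ
        = 2 * (∑ i ∈ Finset.Icc 1 k, ξ i τ * (ξ' i τ - fP k (fun j => ξ j τ) i))
          + 2 * (∑ i ∈ Finset.Icc 1 k, ξ i τ * fP k (fun j => ξ j τ) i) := by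
      rw [Finset.mul_sum, Finset.mul_sum, ← Finset.sum_add_distrib]
      apply Finset.sum_congr rfl
      intro i _
      ring
    rw [hWd, hfsum]
    linarith [hCS τ hτ]
  -- there is a time s in [τ₁, τhat] where W s ≤ a
  obtain ⟨s, hs, hWs⟩ : ∃ s ∈ Set.Icc τ₁ τhat, ∑ i ∈ Finset.Icc 1 k, ξ i s ^ 2 ≤ a := by
    by_contra hcon
    push_neg at hcon
    have hDδ : ∀ τ ∈ Set.Icc τ₁ τhat, δ ≤ Dfun k (fun j => ξ j τ) := by
      intro τ hτ
      have hτ₀' : τ₀ ≤ τ := le_trans hτ₀τ₁ hτ.1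
      exact hδle _ (hsum τ hτ₀') (hA τ hτ₀') (hcon τ hτ).le
    have hG : ∀ τ, τ₀ ≤ τ →
        HasDerivAt (fun t => (∑ i ∈ Finset.Icc 1 k, ξ i t ^ 2) + δ * t)
          ((∑ i ∈ Finset.Icc 1 k, 2 * ξ i τ * ξ' i τ) + δ) τ := by
      intro τ hτ
      exact (hW τ hτ).add (by simpa using (hasDerivAt_id τ).const_mul δ)
    have hanti : AntitoneOn (fun t => (∑ i ∈ Finset.Icc 1 k, ξ i t ^ 2) + δ * t)
        (Set.Icc τ₁ τhat) := by
      apply antitoneOn_of_deriv_nonpos (convex_Icc _ _)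
      · intro τ hτ
        exact (hG τ (le_trans hτ₀τ₁ hτ.1)).continuousAt.continuousWithinAt
      · intro τ hτ
        rw [interior_Icc] at hτ
        exact (hG τ (le_trans hτ₀τ₁ hτ.1.le)).differentiableAt.differentiableWithinAt
      · intro τ hτ
        rw [interior_Icc] at hτ
        have hτ' : τ₀ ≤ τ := le_trans hτ₀τ₁ hτ.1.le
        rw [(hG τ hτ').deriv]
        have h1 := hsplit τ hτ'
        have h2 := hDδ τ (Set.Ioo_subset_Icc_self hτ)
        have h3 : Real.exp (-η * τ) ≤ m := hexp_le τ hτ.1.le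
        have h4 : m * (2 * C₀ ^ 2) ≤ δ :=
          (le_div_iff₀ (by positivity)).mp (min_le_left _ _)
        have h5 : Real.exp (-η * τ) * (2 * C₀ ^ 2) ≤ m * (2 * C₀ ^ 2) :=
          mul_le_mul_of_nonneg_right h3 (by positivity)
        nlinarith [h1, h2, h4, h5]
    have hle := hanti (Set.left_mem_Icc.mpr hτ₁τhat) (Set.right_mem_Icc.mpr hτ₁τhat) hτ₁τhat
    have hW1 : ∑ i ∈ Finset.Icc 1 k, ξ i τ₁ ^ 2 ≤ C₀ ^ 2 := hA τ₁ hτ₀τ₁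
    have hWhat : a < ∑ i ∈ Finset.Icc 1 k, ξ i τhat ^ 2 :=
      hcon τhat (Set.right_mem_Icc.mpr hτ₁τhat)
    have hδτ : δ * τhat = δ * τ₁ + C₀ ^ 2 + δ := by
      rw [hτhatdef]
      field_simp
      ring
    simp only at hle
    linarith [hle, hW1, hWhat, hδτ, ha, hδ]
  -- from s onwards, W can only grow a little
  have hs₀ : τ₀ ≤ s := le_trans hτ₀τ₁ hs.1
  have hGd : ∀ τ, τ₀ ≤ τ →
      HasDerivAt (fun t => (∑ i ∈ Finset.Icc 1 k, ξ i t ^ 2)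
          + 2 * C₀ ^ 2 / η * Real.exp (-η * t))
        ((∑ i ∈ Finset.Icc 1 k, 2 * ξ i τ * ξ' i τ)
          + 2 * C₀ ^ 2 / η * (Real.exp (-η * τ) * -η)) τ := by
    intro τ hτ
    have he : HasDerivAt (fun t : ℝ => Real.exp (-η * t)) (Real.exp (-η * τ) * -η) τ := by
      simpa using ((hasDerivAt_id τ).const_mul (-η)).exp
    exact (hW τ hτ).add (he.const_mul _)
  have hGanti : AntitoneOn (fun t => (∑ i ∈ Finset.Icc 1 k, ξ i t ^ 2)
      + 2 * C₀ ^ 2 / η * Real.exp (-η * t)) (Set.Icc s τhat) := by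
    apply antitoneOn_of_deriv_nonpos (convex_Icc _ _)
    · intro τ hτ
      exact (hGd τ (le_trans hs₀ hτ.1)).continuousAt.continuousWithinAt
    · intro τ hτ
      rw [interior_Icc] at hτ
      exact (hGd τ (le_trans hs₀ hτ.1.le)).differentiableAt.differentiableWithinAt
    · intro τ hτ
      rw [interior_Icc] at hτ
      have hτ' : τ₀ ≤ τ := le_trans hs₀ hτ.1.le
      rw [(hGd τ hτ').deriv]
      have h1 := hsplit τ hτ'
      have hD := Dfun_nonneg k (fun j => ξ j τ)
      have h2 : 2 * C₀ ^ 2 / η * (Real.exp (-η * τ) * -η)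
          = -(2 * (C₀ * (C₀ * Real.exp (-η * τ)))) := by
        field_simp
      linarith [h1, hD, h2.le, h2.ge]
  have hend := hGanti (Set.left_mem_Icc.mpr hs.2) (Set.right_mem_Icc.mpr hs.2) hs.2
  simp only at hend
  have h5 : 2 * C₀ ^ 2 / η * Real.exp (-η * s) ≤ a := by
    have h3 : Real.exp (-η * s) ≤ m := hexp_le s hs.1
    have h4 : m ≤ a * η / (2 * C₀ ^ 2) := min_le_right _ _
    have h6 : Real.exp (-η * s) ≤ a * η / (2 * C₀ ^ 2) := le_trans h3 h4
    calc 2 * C₀ ^ 2 / η * Real.exp (-η * s)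
        ≤ 2 * C₀ ^ 2 / η * (a * η / (2 * C₀ ^ 2)) :=
          mul_le_mul_of_nonneg_left h6 (by positivity)
      _ = a := by field_simp
  have h7 : 0 ≤ 2 * C₀ ^ 2 / η * Real.exp (-η * τhat) := by positivity
  have hfinal : ∑ i ∈ Finset.Icc 1 k, ξ i τhat ^ 2 ≤ ε ^ 2 := by
    have haa : a + a = ε ^ 2 := by rw [hadef]; ring
    linarith [hend, hWs, h5, h7]
  intro i hi1 hik
  have hsq : ξ i τhat ^ 2 ≤ ε ^ 2 :=
    le_trans (Finset.single_le_sum (f := fun i => ξ i τhat ^ 2)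
      (fun _ _ => sq_nonneg _) (Finset.mem_Icc.mpr ⟨hi1, hik⟩)) hfinal
  calc |ξ i τhat| = Real.sqrt (ξ i τhat ^ 2) := (Real.sqrt_sq_eq_abs _).symm
    _ ≤ Real.sqrt (ε ^ 2) := Real.sqrt_le_sqrt hsq
    _ = ε := Real.sqrt_sq hε.le
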